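/- Let X : Ω → ℝⁿ and ε : Ω → ℝᵐ be square-integrable random vectors on a probability space, with X and ε independent and E[ε] = 0. Let F ∈ ℝ^{m×n}, and let L_X be a matrix with E[X Xᵀ] = L_X L_Xᵀ. Let M be a best rank-≤r approximation of F L_X in the Frobenius norm, and set Â = M L_X†. Then rank(Â) ≤ r and for every A ∈ ℝ^{m×n} with rank(A) ≤ r, E‖Â X − (F X + ε)‖₂² ≤ E‖A X − (F X + ε)‖₂². -/

import Mathlib

open Matrix MeasureTheory
open scoped ENNReal NNReal

/-- Second (cross-)moment matrix `E[X Yᵀ]` of two random vectors. -/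
noncomputable def secondMoment {Ω : Type} [MeasurableSpace Ω] (μ : Measure Ω)
    {n m : ℕ} (X : Ω → Fin n → ℝ) (Y : Ω → Fin m → ℝ) : Matrix (Fin n) (Fin m) ℝ :=
  Matrix.of fun i j => ∫ ω, X ω i * Y ω j ∂μ

/-- Frobenius norm of a real matrix. -/
noncomputable def frob {m n : ℕ} (A : Matrix (Fin m) (Fin n) ℝ) : ℝ :=
  Real.sqrt (∑ i, ∑ j, (A i j) ^ 2)

/-- `Ad` is the Moore–Penrose pseudoinverse of `A` (the four Penrose conditions). -/
def IsMoorePenrose {m n : ℕ} (A : Matrix (Fin m) (Fin n) ℝ)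
    (Ad : Matrix (Fin n) (Fin m) ℝ) : Prop :=
  A * Ad * A = A ∧ Ad * A * Ad = Ad ∧ (A * Ad)ᵀ = A * Ad ∧ (Ad * A)ᵀ = Ad * A

private lemma sumSq_eq_trace {a b : ℕ} (A : Matrix (Fin a) (Fin b) ℝ) :
    ∑ i, ∑ j, A i j ^ 2 = Matrix.trace (A * Aᵀ) := by
  simp [Matrix.trace, Matrix.diag, Matrix.mul_apply, pow_two]

private lemma sumSq_proj_le {a b : ℕ} (N : Matrix (Fin a) (Fin b) ℝ)
    (P : Matrix (Fin b) (Fin b) ℝ) (hPt : Pᵀ = P) (hPP : P * P = P) :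
    ∑ i, ∑ j, ((N * P) i j) ^ 2 ≤ ∑ i, ∑ j, (N i j) ^ 2 := by
  have hx : N * P * (P * Nᵀ) = N * P * Nᵀ := by
    rw [show N * P * (P * Nᵀ) = N * (P * P) * Nᵀ by simp only [Matrix.mul_assoc], hPP]
  have h1 : (N * P) * (N * P)ᵀ = N * P * Nᵀ := by
    rw [transpose_mul, hPt, hx]
  have h2 : (N - N * P) * (N - N * P)ᵀ = N * Nᵀ - N * P * Nᵀ := by
    rw [transpose_sub, transpose_mul, hPt, Matrix.sub_mul, Matrix.mul_sub, Matrix.mul_sub, hx]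
    simp only [← Matrix.mul_assoc]
    abel
  have key : ∑ i, ∑ j, (N i j) ^ 2
      = (∑ i, ∑ j, ((N * P) i j) ^ 2) + ∑ i, ∑ j, ((N - N * P) i j) ^ 2 := by
    rw [sumSq_eq_trace, sumSq_eq_trace, sumSq_eq_trace, h1, h2, ← Matrix.trace_add]
    congr 1
    abel
  have hnn : 0 ≤ ∑ i, ∑ j, ((N - N * P) i j) ^ 2 :=
    Finset.sum_nonneg fun i _ => Finset.sum_nonneg fun j _ => sq_nonneg _
  linarith

private lemma row_quadratic {n k : ℕ} (c : Fin n → ℝ) (LX : Matrix (Fin n) (Fin k) ℝ) :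
    ∑ j, ∑ l, c j * c l * ((LX * LXᵀ) j l) = ∑ s, (∑ j, c j * LX j s) ^ 2 := by
  have h1 : ∀ j l, c j * c l * ((LX * LXᵀ) j l)
      = ∑ s, (c j * LX j s) * (c l * LX l s) := by
    intro j l
    rw [Matrix.mul_apply, Finset.mul_sum]
    exact Finset.sum_congr rfl fun s _ => by
      rw [Matrix.transpose_apply]; ring
  simp only [h1]
  have h2 : (∑ j, ∑ l, ∑ s, (c j * LX j s) * (c l * LX l s))
      = ∑ s, ∑ j, ∑ l, (c j * LX j s) * (c l * LX l s) :=
    calc (∑ j, ∑ l, ∑ s, (c j * LX j s) * (c l * LX l s))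
        = ∑ j, ∑ s, ∑ l, (c j * LX j s) * (c l * LX l s) :=
          Finset.sum_congr rfl fun j _ => Finset.sum_comm
      _ = ∑ s, ∑ j, ∑ l, (c j * LX j s) * (c l * LX l s) := Finset.sum_comm
  rw [h2]
  exact Finset.sum_congr rfl fun s _ => by rw [pow_two, Finset.sum_mul_sum]

/-- Forward end-to-end problem: `Â = (F L_X)_r L_X†` is an optimal rank-`≤ r`
linear forward map, i.e. it minimizes `E‖A X − (F X + ε)‖₂²` over `rank(A) ≤ r`. -/
theorem forward_end_to_end_optimal {Ω : Type} [MeasurableSpace Ω]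
    (μ : Measure Ω) [IsProbabilityMeasure μ] {n m k r : ℕ}
    (X : Ω → Fin n → ℝ) (ε : Ω → Fin m → ℝ)
    (hX : MemLp X 2 μ) (hε : MemLp ε 2 μ)
    (hindep : ProbabilityTheory.IndepFun X ε μ)
    (hmean : (∫ ω, ε ω ∂μ) = 0)
    (F : Matrix (Fin m) (Fin n) ℝ)
    (LX : Matrix (Fin n) (Fin k) ℝ) (hLX : secondMoment μ X X = LX * LXᵀ)
    (LXd : Matrix (Fin k) (Fin n) ℝ) (hLXd : IsMoorePenrose LX LXd)
    (M : Matrix (Fin m) (Fin k) ℝ)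
    (hMrank : M.rank ≤ r)
    (hMbest : ∀ N : Matrix (Fin m) (Fin k) ℝ, N.rank ≤ r →
      frob (F * LX - M) ≤ frob (F * LX - N)) :
    (M * LXd).rank ≤ r ∧
      ∀ A : Matrix (Fin m) (Fin n) ℝ, A.rank ≤ r →
        ∫ ω, ∑ i, ((M * LXd) *ᵥ X ω - (F *ᵥ X ω + ε ω)) i ^ 2 ∂μ
          ≤ ∫ ω, ∑ i, (A *ᵥ X ω - (F *ᵥ X ω + ε ω)) i ^ 2 ∂μ := by
  -- component-wise MemLp
  have hXc : ∀ j, MemLp (fun ω => X ω j) 2 μ := fun j =>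
    (ContinuousLinearMap.proj (R := ℝ) (φ := fun _ : Fin n => ℝ) j).comp_memLp' hX
  have hεc : ∀ i, MemLp (fun ω => ε ω i) 2 μ := fun i =>
    (ContinuousLinearMap.proj (R := ℝ) (φ := fun _ : Fin m => ℝ) i).comp_memLp' hε
  -- product of two L² functions is integrable
  have hmul : ∀ f g : Ω → ℝ, MemLp f 2 μ → MemLp g 2 μ →
      Integrable (fun ω => f ω * g ω) μ := by
    intro f g hf hg
    have hpqr : (1 : ℝ≥0∞) / 1 = 1 / 2 + 1 / 2 := by
      rw [ENNReal.div_add_div_same, one_add_one_eq_two, ENNReal.div_self (by norm_num)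
        (by norm_num), ENNReal.div_self (by norm_num) (by norm_num)]
    have h := hf.smul (φ := g) hg (r := 1)
    rw [memLp_one_iff_integrable] at h
    exact h.congr (Filter.Eventually.of_forall fun ω => by
      simp [Pi.smul_apply, smul_eq_mul, mul_comm])
  -- component means of ε vanish
  have hε_int : Integrable ε μ := hε.integrable (by norm_num)
  have hmean_c : ∀ i, ∫ ω, ε ω i ∂μ = 0 := by
    intro i
    have h := (ContinuousLinearMap.proj (R := ℝ)
      (φ := fun _ : Fin m => ℝ) i).integral_comp_comm hε_int
    simpa [hmean] using h
  -- cross moments vanish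
  have hcross : ∀ j i, ∫ ω, X ω j * ε ω i ∂μ = 0 := by
    intro j i
    have hI : ProbabilityTheory.IndepFun (fun ω => X ω j) (fun ω => ε ω i) μ :=
      hindep.comp (measurable_pi_apply j) (measurable_pi_apply i)
    rw [hI.integral_fun_mul_eq_mul_integral (hXc j).aestronglyMeasurable (hεc i).aestronglyMeasurable,
      hmean_c i, mul_zero]
  -- MemLp of components of B *ᵥ X
  have hb : ∀ (B : Matrix (Fin m) (Fin n) ℝ) i, MemLp (fun ω => (B *ᵥ X ω) i) 2 μ := by
    intro B i
    have e : (fun ω => (B *ᵥ X ω) i) = fun ω => ∑ j, B i j * X ω j := by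
      funext ω; simp [Matrix.mulVec, dotProduct]
    rw [e]
    exact memLp_finset_sum _ fun j _ => (hXc j).const_mul _
  -- the key expansion of the objective
  have key : ∀ B : Matrix (Fin m) (Fin n) ℝ,
      ∫ ω, ∑ i, ((B *ᵥ X ω - ε ω) i) ^ 2 ∂μ
        = (∑ i, ∑ s, ((B * LX) i s) ^ 2) + ∑ i, ∫ ω, ε ω i ^ 2 ∂μ := by
    intro B
    have hdiff : ∀ i, MemLp (fun ω => (B *ᵥ X ω) i - ε ω i) 2 μ := fun i =>
      (hb B i).sub (hεc i)
    have e0 : ∀ (ω : Ω) (i : Fin m), (B *ᵥ X ω - ε ω) i = (B *ᵥ X ω) i - ε ω i :=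
      fun ω i => rfl
    simp only [e0]
    rw [integral_finset_sum _ fun i _ => (hdiff i).integrable_sq]
    have step : ∀ i, ∫ ω, ((B *ᵥ X ω) i - ε ω i) ^ 2 ∂μ
        = (∑ s, ((B * LX) i s) ^ 2) + ∫ ω, ε ω i ^ 2 ∂μ := by
      intro i
      have IA : Integrable (fun ω => (B *ᵥ X ω) i * (B *ᵥ X ω) i) μ :=
        hmul _ _ (hb B i) (hb B i)
      have IB : Integrable (fun ω => (B *ᵥ X ω) i * ε ω i) μ := hmul _ _ (hb B i) (hεc i)
      have IC : Integrable (fun ω => ε ω i ^ 2) μ := (hεc i).integrable_sq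
      have e1 : ∀ ω, ((B *ᵥ X ω) i - ε ω i) ^ 2
          = ((B *ᵥ X ω) i * (B *ᵥ X ω) i - 2 * ((B *ᵥ X ω) i * ε ω i)) + ε ω i ^ 2 := by
        intro ω; ring
      have IB2 : Integrable (fun ω => 2 * ((B *ᵥ X ω) i * ε ω i)) μ := IB.const_mul 2
      have IAB : Integrable
          (fun ω => (B *ᵥ X ω) i * (B *ᵥ X ω) i - 2 * ((B *ᵥ X ω) i * ε ω i)) μ :=
        IA.sub IB2
      simp only [e1]
      rw [integral_add IAB IC, integral_sub IA IB2, integral_const_mul]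
      -- cross term vanishes
      have hc : ∫ ω, (B *ᵥ X ω) i * ε ω i ∂μ = 0 := by
        have e2 : ∀ ω, (B *ᵥ X ω) i * ε ω i = ∑ j, B i j * (X ω j * ε ω i) := by
          intro ω; simp [Matrix.mulVec, dotProduct, Finset.sum_mul, mul_assoc]
        simp only [e2]
        rw [integral_finset_sum _ fun j _ => (hmul _ _ (hXc j) (hεc i)).const_mul _]
        simp [integral_const_mul, hcross]
      -- second-moment term
      have hm : ∫ ω, (B *ᵥ X ω) i * (B *ᵥ X ω) i ∂μ = ∑ s, ((B * LX) i s) ^ 2 := by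
        have e3 : ∀ ω, (B *ᵥ X ω) i * (B *ᵥ X ω) i
            = ∑ j, ∑ l, B i j * B i l * (X ω j * X ω l) := by
          intro ω
          simp only [Matrix.mulVec, dotProduct, Finset.sum_mul_sum]
          exact Finset.sum_congr rfl fun j _ => Finset.sum_congr rfl fun l _ => by ring
        simp only [e3]
        rw [integral_finset_sum _ fun j _ =>
          integrable_finset_sum _ fun l _ => (hmul _ _ (hXc j) (hXc l)).const_mul _]
        have e4 : ∀ j, ∫ ω, ∑ l, B i j * B i l * (X ω j * X ω l) ∂μ
            = ∑ l, B i j * B i l * ((LX * LXᵀ) j l) := by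
          intro j
          rw [integral_finset_sum _ fun l _ => (hmul _ _ (hXc j) (hXc l)).const_mul _]
          refine Finset.sum_congr rfl fun l _ => ?_
          rw [integral_const_mul]
          congr 1
          rw [← hLX]
          rfl
        simp only [e4]
        have e5 := row_quadratic (fun j => B i j) LX
        simp only [e5]
        exact Finset.sum_congr rfl fun s _ => by rw [Matrix.mul_apply]
      rw [hc, hm]
      ring
    simp only [step]
    rw [← Finset.sum_add_distrib]
  -- prepare linear algebra facts
  obtain ⟨h1LX, h2LX, h3LX, h4LX⟩ := hLXd
  have hPP : (LXd * LX) * (LXd * LX) = LXd * LX := by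
    rw [show (LXd * LX) * (LXd * LX) = (LXd * LX * LXd) * LX by simp only [Matrix.mul_assoc], h2LX]
  have hFP : (F * LX) * (LXd * LX) = F * LX := by
    rw [show (F * LX) * (LXd * LX) = F * (LX * LXd * LX) by simp only [Matrix.mul_assoc], h1LX]
  constructor
  · exact le_trans (Matrix.rank_mul_le_left M LXd) hMrank
  · intro A hA
    have hre : ∀ (B : Matrix (Fin m) (Fin n) ℝ) (ω : Ω),
        B *ᵥ X ω - (F *ᵥ X ω + ε ω) = (B - F) *ᵥ X ω - ε ω := by
      intro B ω; rw [Matrix.sub_mulVec, sub_add_eq_sub_sub]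
    simp only [hre]
    rw [key (M * LXd - F), key (A - F)]
    apply add_le_add_left
    have eq1 : (M * LXd - F) * LX = -((F * LX - M) * (LXd * LX)) := by
      rw [Matrix.sub_mul, Matrix.sub_mul, hFP, neg_sub, Matrix.mul_assoc]
    have eq2 : (A - F) * LX = -(F * LX - A * LX) := by
      rw [Matrix.sub_mul, neg_sub]
    have s1 : ∑ i, ∑ s, (((M * LXd - F) * LX) i s) ^ 2
        = ∑ i, ∑ s, (((F * LX - M) * (LXd * LX)) i s) ^ 2 := by
      rw [eq1]; simp [Matrix.neg_apply]
    have s2 := sumSq_proj_le (F * LX - M) (LXd * LX) h4LX hPP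
    have hrk : (A * LX).rank ≤ r := le_trans (Matrix.rank_mul_le_left A LX) hA
    have s3raw := hMbest (A * LX) hrk
    have h0 : (0:ℝ) ≤ ∑ i, ∑ s, ((F * LX - M) i s) ^ 2 :=
      Finset.sum_nonneg fun i _ => Finset.sum_nonneg fun s _ => sq_nonneg _
    have h0' : (0:ℝ) ≤ ∑ i, ∑ s, ((F * LX - A * LX) i s) ^ 2 :=
      Finset.sum_nonneg fun i _ => Finset.sum_nonneg fun s _ => sq_nonneg _
    have s3 : ∑ i, ∑ s, ((F * LX - M) i s) ^ 2
        ≤ ∑ i, ∑ s, ((F * LX - A * LX) i s) ^ 2 := by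
      calc ∑ i, ∑ s, ((F * LX - M) i s) ^ 2
          = Real.sqrt (∑ i, ∑ s, ((F * LX - M) i s) ^ 2) ^ 2 := (Real.sq_sqrt h0).symm
        _ ≤ Real.sqrt (∑ i, ∑ s, ((F * LX - A * LX) i s) ^ 2) ^ 2 :=
            pow_le_pow_left₀ (Real.sqrt_nonneg _) s3raw 2
        _ = ∑ i, ∑ s, ((F * LX - A * LX) i s) ^ 2 := Real.sq_sqrt h0'
    have s4 : ∑ i, ∑ s, ((F * LX - A * LX) i s) ^ 2
        = ∑ i, ∑ s, (((A - F) * LX) i s) ^ 2 := by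
      rw [eq2]
      exact Finset.sum_congr rfl fun i _ => Finset.sum_congr rfl fun s _ => by
        rw [Matrix.neg_apply, neg_sq]
    linarith
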